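/- arXiv:1410.2642 — 2 statements merged into one kernel-verified Lean document; each statement's English description precedes it below -/
import Mathlib

section
/- A rational polyomino written as (1/m)⋃_{z∈S}(z+[0,1]²) has connected interior and connected complement if and only if S and ℤ²\S both induce connected subgraphs of the nearest-neighbour lattice ℤ² (where x,y are adjacent iff ‖x−y‖₁ = 1). -/
open Set Pointwise

/-- The closed unit square `z + [0,1]²` for `z ∈ ℤ²`, viewed in ℝ². -/
def unitSquare (z : ℤ × ℤ) : Set (ℝ × ℝ) :=
  Icc (z.1 : ℝ) ((z.1 : ℝ) + 1) ×ˢ Icc (z.2 : ℝ) ((z.2 : ℝ) + 1)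

/-- The nearest-neighbour lattice on ℤ²: `x ~ y` iff `‖x − y‖₁ = 1`. -/
def latticeGraph : SimpleGraph (ℤ × ℤ) where
  Adj x y := (x.1 - y.1).natAbs + (x.2 - y.2).natAbs = 1
  symm := by
    constructor
    intro x y h
    try dsimp only at h ⊢
    omega
  loopless := by constructor; intro x h; simp at h

namespace PolyominoAux

lemma mem_unitSquare {z : ℤ × ℤ} {p : ℝ × ℝ} :
    p ∈ unitSquare z ↔ ((z.1 : ℝ) ≤ p.1 ∧ p.1 ≤ z.1 + 1) ∧ ((z.2 : ℝ) ≤ p.2 ∧ p.2 ≤ z.2 + 1) := by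
  rw [unitSquare, Set.mem_prod, Set.mem_Icc, Set.mem_Icc]

/-- The region of points all of whose containing cells lie in `T`. -/
def region (T : Set (ℤ × ℤ)) : Set (ℝ × ℝ) := {p | ∀ z, p ∈ unitSquare z → z ∈ T}

lemma exists_mem_square (p : ℝ × ℝ) : ∃ z, p ∈ unitSquare z := by
  refine ⟨(⌊p.1⌋, ⌊p.2⌋), mem_unitSquare.2 ⟨⟨Int.floor_le _, ?_⟩, ⟨Int.floor_le _, ?_⟩⟩⟩
  · exact (Int.lt_floor_add_one p.1).le
  · exact (Int.lt_floor_add_one p.2).le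

/-- Centre of a cell. -/
noncomputable def ctr (z : ℤ × ℤ) : ℝ × ℝ := ((z.1 : ℝ) + 1/2, (z.2 : ℝ) + 1/2)

lemma int_half {v z : ℤ} (h1 : (v : ℝ) ≤ z + 1/2) (h2 : (z : ℝ) + 1/2 ≤ v + 1) : v = z := by
  have a1 : (v : ℝ) < z + 1 := by linarith
  have a2 : (z : ℝ) < v + 1 := by linarith
  have b1 : v < z + 1 := by exact_mod_cast a1
  have b2 : z < v + 1 := by exact_mod_cast a2
  omega

lemma ctr_mem_self (z : ℤ × ℤ) : ctr z ∈ unitSquare z := by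
  refine mem_unitSquare.2 ⟨⟨?_, ?_⟩, ⟨?_, ?_⟩⟩ <;> simp [ctr] <;> norm_num

lemma eq_of_ctr_mem {z w : ℤ × ℤ} (h : ctr z ∈ unitSquare w) : w = z := by
  obtain ⟨⟨h1, h2⟩, ⟨h3, h4⟩⟩ := mem_unitSquare.1 h
  simp only [ctr] at h1 h2 h3 h4
  exact Prod.ext (int_half h1 h2) (int_half h3 h4)

lemma ctr_mem_region {T : Set (ℤ × ℤ)} {z : ℤ × ℤ} (hz : z ∈ T) : ctr z ∈ region T := by
  intro w hw; rwa [eq_of_ctr_mem hw]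

/-- Key coordinate lemma: near `x`, cells containing nearby points contain `x`,
and `x,y` share a containing interval. -/
lemma coord_eps (x : ℝ) : ∃ ε > 0, ∀ y : ℝ, |y - x| < ε →
    (∀ a : ℤ, (a : ℝ) ≤ y → y ≤ a + 1 → ((a : ℝ) ≤ x ∧ x ≤ a + 1)) ∧
    (∃ a : ℤ, (a : ℝ) ≤ x ∧ x ≤ a + 1 ∧ (a : ℝ) ≤ y ∧ y ≤ a + 1) := by
  by_cases h : (⌊x⌋ : ℝ) = x
  · refine ⟨1, one_pos, fun y hy => ⟨fun a h1 h2 => ?_, ?_⟩⟩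
    · rw [abs_lt] at hy
      constructor
      · have : (a : ℝ) < ⌊x⌋ + 1 := by rw [h]; linarith
        have : a < ⌊x⌋ + 1 := by exact_mod_cast this
        have : a ≤ ⌊x⌋ := by omega
        rw [← h]; exact_mod_cast this
      · have : (⌊x⌋ : ℝ) < a + 1 + 1 := by rw [h]; linarith
        have : ⌊x⌋ < a + 1 + 1 := by exact_mod_cast this
        have : ⌊x⌋ ≤ a + 1 := by omega
        rw [← h]; exact_mod_cast this
    · rw [abs_lt] at hy
      rcases le_or_gt x y with hxy | hxy
      · exact ⟨⌊x⌋, le_of_eq h, by rw [h]; linarith, by rw [h]; linarith, by rw [h]; linarith⟩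
      · refine ⟨⌊x⌋ - 1, ?_, ?_, ?_, ?_⟩ <;> push_cast <;> rw [h] <;> linarith
  · have hf0 : (⌊x⌋ : ℝ) < x := lt_of_le_of_ne (Int.floor_le x) h
    have hf1 : x < ⌊x⌋ + 1 := Int.lt_floor_add_one x
    refine ⟨min (x - ⌊x⌋) (⌊x⌋ + 1 - x), lt_min (by linarith) (by linarith),
      fun y hy => ?_⟩
    rw [abs_lt, lt_min_iff, neg_lt, lt_min_iff] at hy
    obtain ⟨⟨hy1, hy2⟩, hy3, hy4⟩ := hy
    have key1 : (⌊x⌋ : ℝ) < y := by linarith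
    have key2 : y < ⌊x⌋ + 1 := by linarith
    constructor
    · intro a h1 h2
      have a1 : (a : ℝ) < ⌊x⌋ + 1 := lt_of_le_of_lt h1 key2
      have a2 : (⌊x⌋ : ℝ) < a + 1 := lt_of_lt_of_le key1 h2
      have b1 : a < ⌊x⌋ + 1 := by exact_mod_cast a1
      have b2 : ⌊x⌋ < a + 1 := by exact_mod_cast a2
      have : a = ⌊x⌋ := by omega
      subst this
      exact ⟨Int.floor_le x, hf1.le⟩
    · exact ⟨⌊x⌋, Int.floor_le x, hf1.le, key1.le, key2.le⟩

/-- 2-D version. -/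
lemma nbhd (p : ℝ × ℝ) : ∃ ε > 0, ∀ q : ℝ × ℝ, dist q p < ε →
    (∀ z, q ∈ unitSquare z → p ∈ unitSquare z) ∧
    (∃ z, p ∈ unitSquare z ∧ q ∈ unitSquare z) := by
  obtain ⟨ε₁, hε₁, H₁⟩ := coord_eps p.1
  obtain ⟨ε₂, hε₂, H₂⟩ := coord_eps p.2
  refine ⟨min ε₁ ε₂, lt_min hε₁ hε₂, fun q hq => ?_⟩
  rw [Prod.dist_eq, max_lt_iff] at hq
  have d1 : |q.1 - p.1| < ε₁ := lt_of_lt_of_le (by simpa [Real.dist_eq] using hq.1) (min_le_left _ _)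
  have d2 : |q.2 - p.2| < ε₂ := lt_of_lt_of_le (by simpa [Real.dist_eq] using hq.2) (min_le_right _ _)
  obtain ⟨C1, E1⟩ := H₁ q.1 d1
  obtain ⟨C2, E2⟩ := H₂ q.2 d2
  constructor
  · intro z hz
    obtain ⟨⟨h1, h2⟩, h3, h4⟩ := mem_unitSquare.1 hz
    exact mem_unitSquare.2 ⟨C1 z.1 h1 h2, C2 z.2 h3 h4⟩
  · obtain ⟨a, ha1, ha2, ha3, ha4⟩ := E1
    obtain ⟨b, hb1, hb2, hb3, hb4⟩ := E2
    exact ⟨(a, b), mem_unitSquare.2 ⟨⟨ha1, ha2⟩, hb1, hb2⟩, mem_unitSquare.2 ⟨⟨ha3, ha4⟩, hb3, hb4⟩⟩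

lemma eq_of_strict {q : ℝ × ℝ} {z w : ℤ × ℤ} (h1 : (z.1 : ℝ) < q.1) (h2 : q.1 < z.1 + 1)
    (h3 : (z.2 : ℝ) < q.2) (h4 : q.2 < z.2 + 1) (hw : q ∈ unitSquare w) : w = z := by
  obtain ⟨⟨g1, g2⟩, g3, g4⟩ := mem_unitSquare.1 hw
  have a1 : (w.1 : ℝ) < z.1 + 1 := lt_of_le_of_lt g1 h2
  have a2 : (z.1 : ℝ) < w.1 + 1 := lt_of_lt_of_le h1 g2
  have a3 : (w.2 : ℝ) < z.2 + 1 := lt_of_le_of_lt g3 h4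
  have a4 : (z.2 : ℝ) < w.2 + 1 := lt_of_lt_of_le h3 g4
  have b1 : w.1 < z.1 + 1 := by exact_mod_cast a1
  have b2 : z.1 < w.1 + 1 := by exact_mod_cast a2
  have b3 : w.2 < z.2 + 1 := by exact_mod_cast a3
  have b4 : z.2 < w.2 + 1 := by exact_mod_cast a4
  exact Prod.ext (by omega) (by omega)



lemma joinedIn_of_segment {s : Set (ℝ × ℝ)} {x y : ℝ × ℝ} (h : segment ℝ x y ⊆ s) :
    JoinedIn s x y :=
  (((convex_segment x y).isPathConnected ⟨x, left_mem_segment ℝ x y⟩).joinedIn x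
    (left_mem_segment ℝ x y) y (right_mem_segment ℝ x y)).mono h

lemma seg_to_ctr {T : Set (ℤ × ℤ)} {p : ℝ × ℝ} {z : ℤ × ℤ} (hp : p ∈ region T)
    (hz : p ∈ unitSquare z) : segment ℝ p (ctr z) ⊆ region T := by
  rintro x ⟨a, b, ha, hb, hab, rfl⟩
  obtain ⟨⟨h1, h2⟩, h3, h4⟩ := mem_unitSquare.1 hz
  rcases eq_or_lt_of_le hb with hb0 | hb0
  · have : a = 1 := by linarith
    subst this
    simp only [← hb0, one_smul, zero_smul, add_zero]
    exact hp
  · intro w hw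
    have e1 : (a • p + b • ctr z).1 = a * p.1 + b * ((z.1 : ℝ) + 1/2) := rfl
    have e2 : (a • p + b • ctr z).2 = a * p.2 + b * ((z.2 : ℝ) + 1/2) := rfl
    have habr1 : a * (z.1 : ℝ) + b * (z.1 : ℝ) = (z.1 : ℝ) := by linear_combination (z.1 : ℝ) * hab
    have habr2 : a * (z.2 : ℝ) + b * (z.2 : ℝ) = (z.2 : ℝ) := by linear_combination (z.2 : ℝ) * hab
    have s1 : (z.1 : ℝ) < (a • p + b • ctr z).1 := by
      rw [e1]; linarith [habr1, mul_nonneg ha (sub_nonneg.2 h1)]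
    have s2 : (a • p + b • ctr z).1 < z.1 + 1 := by
      rw [e1]; linarith [habr1, mul_nonneg ha (sub_nonneg.2 h2)]
    have s3 : (z.2 : ℝ) < (a • p + b • ctr z).2 := by
      rw [e2]; linarith [habr2, mul_nonneg ha (sub_nonneg.2 h3)]
    have s4 : (a • p + b • ctr z).2 < z.2 + 1 := by
      rw [e2]; linarith [habr2, mul_nonneg ha (sub_nonneg.2 h4)]
    rw [eq_of_strict s1 s2 s3 s4 hw]
    exact hp z hz

lemma int_three_half {v z : ℤ} (h1 : (v : ℝ) ≤ z + 3/2) (h2 : (z : ℝ) + 1/2 ≤ v + 1) :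
    v = z ∨ v = z + 1 := by
  have a1 : (v : ℝ) < z + 2 := by linarith
  have a2 : (z : ℝ) < v + 1 := by linarith
  have b1 : v < z + 2 := by exact_mod_cast a1
  have b2 : z < v + 1 := by exact_mod_cast a2
  omega

lemma seg_ctrs {T : Set (ℤ × ℤ)} {z w : ℤ × ℤ} (hzT : z ∈ T) (hwT : w ∈ T)
    (hadj : latticeGraph.Adj z w) : segment ℝ (ctr z) (ctr w) ⊆ region T := by
  have hsym : ∀ z w : ℤ × ℤ, z ∈ T → w ∈ T → w.1 = z.1 + 1 → z.2 = w.2 →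
      segment ℝ (ctr z) (ctr w) ⊆ region T := by
    intro z w hzT hwT hh hv
    rintro x ⟨a, b, ha, hb, hab, rfl⟩ v hv'
    obtain ⟨⟨g1, g2⟩, g3, g4⟩ := mem_unitSquare.1 hv'
    have e1 : (a • ctr z + b • ctr w).1 = a * ((z.1 : ℝ) + 1/2) + b * ((w.1 : ℝ) + 1/2) := rfl
    have e2 : (a • ctr z + b • ctr w).2 = a * ((z.2 : ℝ) + 1/2) + b * ((w.2 : ℝ) + 1/2) := rfl
    have hw1 : (w.1 : ℝ) = (z.1 : ℝ) + 1 := by exact_mod_cast congrArg (Int.cast : ℤ → ℝ) hh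
    have hw2 : (z.2 : ℝ) = (w.2 : ℝ) := by exact_mod_cast congrArg (Int.cast : ℤ → ℝ) hv
    have xe1 : (a • ctr z + b • ctr w).1 = (z.1 : ℝ) + 1/2 + b := by
      rw [e1, hw1]; linear_combination ((z.1 : ℝ) + 1/2) * hab
    have xe2 : (a • ctr z + b • ctr w).2 = (z.2 : ℝ) + 1/2 := by
      rw [e2, hw2]; linear_combination ((w.2 : ℝ) + 1/2) * hab
    have x1lo : (z.1 : ℝ) + 1/2 ≤ (a • ctr z + b • ctr w).1 := by rw [xe1]; linarith
    have x1hi : (a • ctr z + b • ctr w).1 ≤ (z.1 : ℝ) + 3/2 := by rw [xe1]; linarith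
    have x2eq : (a • ctr z + b • ctr w).2 = (z.2 : ℝ) + 1/2 := xe2
    have c2 : v.2 = z.2 := int_half (by rw [x2eq] at g3; linarith) (by rw [x2eq] at g4; linarith)
    have c1 : v.1 = z.1 ∨ v.1 = z.1 + 1 :=
      int_three_half (by linarith) (by linarith)
    rcases c1 with c1 | c1
    · have : v = z := Prod.ext c1 c2
      rwa [this]
    · have : v = w := Prod.ext (by omega) (by omega)
      rwa [this]
  have hver : ∀ z w : ℤ × ℤ, z ∈ T → w ∈ T → w.2 = z.2 + 1 → z.1 = w.1 →
      segment ℝ (ctr z) (ctr w) ⊆ region T := by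
    intro z w hzT hwT hh hv
    rintro x ⟨a, b, ha, hb, hab, rfl⟩ v hv'
    obtain ⟨⟨g1, g2⟩, g3, g4⟩ := mem_unitSquare.1 hv'
    have e1 : (a • ctr z + b • ctr w).1 = a * ((z.1 : ℝ) + 1/2) + b * ((w.1 : ℝ) + 1/2) := rfl
    have e2 : (a • ctr z + b • ctr w).2 = a * ((z.2 : ℝ) + 1/2) + b * ((w.2 : ℝ) + 1/2) := rfl
    have hw1 : (w.2 : ℝ) = (z.2 : ℝ) + 1 := by exact_mod_cast congrArg (Int.cast : ℤ → ℝ) hh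
    have hw2 : (z.1 : ℝ) = (w.1 : ℝ) := by exact_mod_cast congrArg (Int.cast : ℤ → ℝ) hv
    have xe1 : (a • ctr z + b • ctr w).2 = (z.2 : ℝ) + 1/2 + b := by
      rw [e2, hw1]; linear_combination ((z.2 : ℝ) + 1/2) * hab
    have xe2 : (a • ctr z + b • ctr w).1 = (z.1 : ℝ) + 1/2 := by
      rw [e1, hw2]; linear_combination ((w.1 : ℝ) + 1/2) * hab
    have x1lo : (z.2 : ℝ) + 1/2 ≤ (a • ctr z + b • ctr w).2 := by rw [xe1]; linarith
    have x1hi : (a • ctr z + b • ctr w).2 ≤ (z.2 : ℝ) + 3/2 := by rw [xe1]; linarith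
    have x2eq : (a • ctr z + b • ctr w).1 = (z.1 : ℝ) + 1/2 := xe2
    have c2 : v.1 = z.1 := int_half (by rw [x2eq] at g1; linarith) (by rw [x2eq] at g2; linarith)
    have c1 : v.2 = z.2 ∨ v.2 = z.2 + 1 :=
      int_three_half (by linarith) (by linarith)
    rcases c1 with c1 | c1
    · have : v = z := Prod.ext c2 c1
      rwa [this]
    · have : v = w := Prod.ext (by omega) (by omega)
      rwa [this]
  have hadj' : (z.1 - w.1).natAbs + (z.2 - w.2).natAbs = 1 := hadj
  have : (z.2 = w.2 ∧ (w.1 = z.1 + 1 ∨ z.1 = w.1 + 1)) ∨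
         (z.1 = w.1 ∧ (w.2 = z.2 + 1 ∨ z.2 = w.2 + 1)) := by omega
  rcases this with ⟨h2, h1 | h1⟩ | ⟨h2, h1 | h1⟩
  · exact hsym z w hzT hwT h1 h2
  · rw [segment_symm]; exact hsym w z hwT hzT h1 h2.symm
  · exact hver z w hzT hwT h1 h2
  · rw [segment_symm]; exact hver w z hwT hzT h1 h2.symm



lemma cast_le_int {a b : ℤ} (h : (a : ℝ) ≤ (b : ℝ) + 1) : a ≤ b + 1 := by exact_mod_cast h

lemma reach_of_both {T : Set (ℤ × ℤ)} {p : ℝ × ℝ} (hp : p ∈ region T) {z w : ℤ × ℤ}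
    (hz : p ∈ unitSquare z) (hw : p ∈ unitSquare w) :
    (latticeGraph.induce T).Reachable ⟨z, hp z hz⟩ ⟨w, hp w hw⟩ := by
  obtain ⟨⟨a1, a2⟩, a3, a4⟩ := mem_unitSquare.1 hz
  obtain ⟨⟨b1, b2⟩, b3, b4⟩ := mem_unitSquare.1 hw
  have hmid : p ∈ unitSquare (z.1, w.2) := mem_unitSquare.2 ⟨⟨a1, a2⟩, b3, b4⟩
  have hmidT := hp _ hmid
  have d1 : z.2 ≤ w.2 + 1 := cast_le_int (by linarith)
  have d2 : w.2 ≤ z.2 + 1 := cast_le_int (by linarith)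
  have e1 : z.1 ≤ w.1 + 1 := cast_le_int (by linarith)
  have e2 : w.1 ≤ z.1 + 1 := cast_le_int (by linarith)
  have step1 : (latticeGraph.induce T).Reachable ⟨z, hp z hz⟩ ⟨(z.1, w.2), hmidT⟩ := by
    by_cases hc : z.2 = w.2
    · have : (⟨z, hp z hz⟩ : ↥T) = ⟨(z.1, w.2), hmidT⟩ := Subtype.ext (Prod.ext rfl hc)
      rw [this]
    · have hadj : latticeGraph.Adj z (z.1, w.2) := by
        show (z.1 - z.1).natAbs + (z.2 - w.2).natAbs = 1
        omega
      exact (SimpleGraph.Adj.reachable (by exact hadj))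
  have step2 : (latticeGraph.induce T).Reachable ⟨(z.1, w.2), hmidT⟩ ⟨w, hp w hw⟩ := by
    by_cases hc : z.1 = w.1
    · have : (⟨(z.1, w.2), hmidT⟩ : ↥T) = ⟨w, hp w hw⟩ := Subtype.ext (Prod.ext hc rfl)
      rw [this]
    · have hadj : latticeGraph.Adj (z.1, w.2) w := by
        show (z.1 - w.1).natAbs + (w.2 - w.2).natAbs = 1
        omega
      exact (SimpleGraph.Adj.reachable (by exact hadj))
  exact step1.trans step2

lemma joined_of_walk {T : Set (ℤ × ℤ)} {a b : ↥T} (w : (latticeGraph.induce T).Walk a b) :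
    JoinedIn (region T) (ctr a.1) (ctr b.1) := by
  induction w with
  | nil => exact JoinedIn.refl (ctr_mem_region (Subtype.mem _))
  | cons h p ih =>
      rename_i u v c
      exact (joinedIn_of_segment (seg_ctrs u.2 v.2 h)).trans ih

theorem region_connected_iff (T : Set (ℤ × ℤ)) :
    IsConnected (region T) ↔ (latticeGraph.induce T).Connected := by
  classical
  constructor
  · intro hconn
    obtain ⟨p₀, hp₀⟩ := hconn.nonempty
    obtain ⟨z₀, hz₀sq⟩ := exists_mem_square p₀
    have hz₀ : z₀ ∈ T := hp₀ z₀ hz₀sq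
    set G := latticeGraph.induce T with hGdef
    choose ε hε hprop using nbhd
    set U : Set (ℝ × ℝ) :=
      {q | ∃ w, q ∈ unitSquare w ∧ ∃ hw : w ∈ T, G.Reachable ⟨z₀, hz₀⟩ ⟨w, hw⟩} with hUdef
    have hU : ∀ q, ∀ hq : q ∈ region T, q ∈ U → ∀ w (hwsq : q ∈ unitSquare w),
        G.Reachable ⟨z₀, hz₀⟩ ⟨w, hq w hwsq⟩ := by
      intro q hq hqU w hwsq
      obtain ⟨w₀, hw₀sq, hw₀T, hreach⟩ := hqU
      exact hreach.trans (reach_of_both hq hw₀sq hwsq)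
    have key : ∀ z₁ (hz₁ : z₁ ∈ T), G.Reachable ⟨z₀, hz₀⟩ ⟨z₁, hz₁⟩ := by
      by_contra hcon
      push_neg at hcon
      obtain ⟨z₁, hz₁, hnr⟩ := hcon
      set u : Set (ℝ × ℝ) := ⋃ q ∈ region T ∩ U, Metric.ball q (ε q) with hu
      set v : Set (ℝ × ℝ) := ⋃ q ∈ region T \ U, Metric.ball q (ε q) with hv
      have hou : IsOpen u := isOpen_biUnion (fun q _ => Metric.isOpen_ball)
      have hov : IsOpen v := isOpen_biUnion (fun q _ => Metric.isOpen_ball)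
      have hcover : region T ⊆ u ∪ v := by
        intro q hq
        by_cases hqU : q ∈ U
        · exact Or.inl (Set.mem_biUnion ⟨hq, hqU⟩ (Metric.mem_ball_self (hε q)))
        · exact Or.inr (Set.mem_biUnion ⟨hq, hqU⟩ (Metric.mem_ball_self (hε q)))
      have hctr1 : ctr z₀ ∈ region T ∩ u := by
        have h1 : ctr z₀ ∈ region T := ctr_mem_region hz₀
        have h2 : ctr z₀ ∈ U := ⟨z₀, ctr_mem_self z₀, hz₀, SimpleGraph.Reachable.refl _⟩
        exact ⟨h1, Set.mem_biUnion ⟨h1, h2⟩ (Metric.mem_ball_self (hε _))⟩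
      have hctr2 : ctr z₁ ∈ region T ∩ v := by
        have h1 : ctr z₁ ∈ region T := ctr_mem_region hz₁
        have h2 : ctr z₁ ∉ U := by
          rintro ⟨w, hwsq, hwT, hreach⟩
          have : w = z₁ := eq_of_ctr_mem hwsq
          subst this
          exact hnr hreach
        exact ⟨h1, Set.mem_biUnion ⟨h1, h2⟩ (Metric.mem_ball_self (hε _))⟩
      obtain ⟨x, hxr, hxu, hxv⟩ := hconn.isPreconnected u v hou hov hcover
        ⟨ctr z₀, hctr1.1, hctr1.2⟩ ⟨ctr z₁, hctr2.1, hctr2.2⟩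
      obtain ⟨q, ⟨hqr, hqU⟩, hxq⟩ := Set.mem_iUnion₂.1 hxu
      obtain ⟨q', ⟨hq'r, hq'U⟩, hxq'⟩ := Set.mem_iUnion₂.1 hxv
      -- x's cells are cells of q and of q'
      have hxcq := (hprop q x (Metric.mem_ball.1 hxq)).1
      have hxcq' := (hprop q' x (Metric.mem_ball.1 hxq')).1
      obtain ⟨zx, hzxsq⟩ := exists_mem_square x
      have hzxq : q ∈ unitSquare zx := hxcq zx hzxsq
      have hzxq' : q' ∈ unitSquare zx := hxcq' zx hzxsq
      exact hq'U ⟨zx, hzxq', hq'r zx hzxq', hU q hqr hqU zx hzxq⟩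
    have : Nonempty ↥T := ⟨⟨z₀, hz₀⟩⟩
    exact SimpleGraph.Connected.mk (fun a b => ((key a.1 a.2).symm.trans (key b.1 b.2)))
  · intro hG
    obtain ⟨⟨z₀, hz₀⟩⟩ := hG.nonempty
    have hpc : IsPathConnected (region T) := by
      refine ⟨ctr z₀, ctr_mem_region hz₀, ?_⟩
      intro p hp
      obtain ⟨z, hzsq⟩ := exists_mem_square p
      have hzT : z ∈ T := hp z hzsq
      obtain ⟨wlk⟩ := hG.preconnected ⟨z₀, hz₀⟩ ⟨z, hzT⟩
      exact (joined_of_walk wlk).trans (joinedIn_of_segment (seg_to_ctr hp hzsq)).symm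
    exact hpc.isConnected



lemma interior_eq_region (S : Finset (ℤ × ℤ)) :
    interior (⋃ z ∈ S, unitSquare z) = region (↑S : Set (ℤ × ℤ)) := by
  apply Set.Subset.antisymm
  · intro p hp z hz
    obtain ⟨ε, hε, hball⟩ := Metric.isOpen_iff.1 isOpen_interior p hp
    obtain ⟨⟨h1, h2⟩, h3, h4⟩ := mem_unitSquare.1 hz
    set δ : ℝ := min (ε/2) (1/2) with hδdef
    have hδ0 : 0 < δ := lt_min (by linarith) (by norm_num)
    have hδε : δ < ε := lt_of_le_of_lt (min_le_left _ _) (by linarith)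
    have hδh : δ ≤ 1/2 := min_le_right _ _
    set q1 : ℝ := max ((z.1 : ℝ) + δ) (min ((z.1 : ℝ) + 1 - δ) p.1) with hq1
    set q2 : ℝ := max ((z.2 : ℝ) + δ) (min ((z.2 : ℝ) + 1 - δ) p.2) with hq2
    have B : ∀ (r x : ℝ), r ≤ x → x ≤ r + 1 →
        (r < max (r + δ) (min (r + 1 - δ) x) ∧ max (r + δ) (min (r + 1 - δ) x) < r + 1 ∧
         |max (r + δ) (min (r + 1 - δ) x) - x| ≤ δ) := by
      intro r x hrx hxr
      have m1 : min (r + 1 - δ) x ≤ r + 1 - δ := min_le_left _ _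
      have m2 : min (r + 1 - δ) x ≤ x := min_le_right _ _
      have m3 : x - δ ≤ min (r + 1 - δ) x := le_min (by linarith) (by linarith)
      have M1 : (r + δ) ≤ max (r + δ) (min (r + 1 - δ) x) := le_max_left _ _
      have M2 : min (r + 1 - δ) x ≤ max (r + δ) (min (r + 1 - δ) x) := le_max_right _ _
      have M3 : max (r + δ) (min (r + 1 - δ) x) ≤ r + 1 - δ :=
        max_le (by linarith) m1
      have M4 : max (r + δ) (min (r + 1 - δ) x) ≤ x + δ :=
        max_le (by linarith) (by linarith)
      refine ⟨by linarith, by linarith, abs_le.2 ⟨by linarith, by linarith⟩⟩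
    obtain ⟨c1, c2, c3⟩ := B (z.1 : ℝ) p.1 h1 h2
    obtain ⟨d1, d2, d3⟩ := B (z.2 : ℝ) p.2 h3 h4
    have hqball : (q1, q2) ∈ Metric.ball p ε := by
      rw [Metric.mem_ball, Prod.dist_eq]
      exact max_lt (lt_of_le_of_lt (by simpa [Real.dist_eq] using c3) hδε)
        (lt_of_le_of_lt (by simpa [Real.dist_eq] using d3) hδε)
    have hqQ : (q1, q2) ∈ ⋃ z ∈ S, unitSquare z := interior_subset (hball hqball)
    obtain ⟨w, hwS, hwsq⟩ := Set.mem_iUnion₂.1 hqQ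
    have : w = z := eq_of_strict c1 c2 d1 d2 hwsq
    subst this
    exact hwS
  · intro p hp
    obtain ⟨ε, hε, hprop⟩ := nbhd p
    refine mem_interior.2 ⟨Metric.ball p ε, ?_, Metric.isOpen_ball, Metric.mem_ball_self hε⟩
    intro q hq
    obtain ⟨z, hpz, hqz⟩ := (hprop q (Metric.mem_ball.1 hq)).2
    exact Set.mem_iUnion₂.2 ⟨z, hp z hpz, hqz⟩

lemma compl_eq_region (S : Finset (ℤ × ℤ)) :
    (⋃ z ∈ S, unitSquare z)ᶜ = region ((↑S : Set (ℤ × ℤ))ᶜ) := by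
  ext p
  simp only [Set.mem_compl_iff, Set.mem_iUnion, not_exists, region, Set.mem_setOf_eq]
  constructor
  · intro h z hz
    exact fun hzS => h z hzS hz
  · intro h z hzS hz
    exact h z hz hzS

end PolyominoAux

open PolyominoAux in
/-- a rational polyomino `(1/m)⋃_{z∈S}(z+[0,1]²)` has connected interior
and connected complement iff `S` and `ℤ²\S` both induce connected subgraphs of the
nearest-neighbour lattice. -/
theorem simple_iff_lattice_connected (m : ℕ) (hm : 0 < m) (S : Finset (ℤ × ℤ))
    (P : Set (ℝ × ℝ)) (hP : P = (m : ℝ)⁻¹ • ⋃ z ∈ S, unitSquare z) :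
    (IsConnected (interior P) ∧ IsConnected Pᶜ) ↔
      ((latticeGraph.induce (S : Set (ℤ × ℤ))).Connected ∧
        (latticeGraph.induce ((S : Set (ℤ × ℤ))ᶜ)).Connected) := by
  have hc : ((m : ℝ))⁻¹ ≠ 0 := inv_ne_zero (Nat.cast_ne_zero.2 hm.ne')
  set Q : Set (ℝ × ℝ) := ⋃ z ∈ S, unitSquare z with hQ
  have hsmul : ∀ s : Set (ℝ × ℝ), IsConnected ((m : ℝ)⁻¹ • s) ↔ IsConnected s := by
    intro s
    rw [show (m : ℝ)⁻¹ • s = ((Homeomorph.smulOfNeZero _ hc : (ℝ × ℝ) ≃ₜ (ℝ × ℝ))) '' s from rfl]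
    exact (Homeomorph.smulOfNeZero _ hc).isConnected_image
  have hint : interior P = (m : ℝ)⁻¹ • interior Q := by rw [hP, interior_smul₀ hc]
  have hcompl : Pᶜ = (m : ℝ)⁻¹ • Qᶜ := by
    rw [hP]
    lift ((m : ℝ))⁻¹ to ℝˣ using IsUnit.mk0 _ hc with u hu
    rw [← Units.smul_def, ← Units.smul_def, Set.smul_set_compl]
  rw [hint, hcompl, hsmul, hsmul, interior_eq_region, compl_eq_region,
    region_connected_iff, region_connected_iff]
end

section
/- There exists a constant C such that for a Poisson random variable X with mean λ = 4^k (k ≥ 1), one has 1 − 4^{-k}·E[min(X, 4^k − 1)] ≤ C·2^{-k}. Consequently, a nonnegative random variable D satisfying P(D > 2^k√2) ≤ 1 − 4^{-k}E[min(X,4^k−1)] for all integers k ≥ 1 satisfies P(D > t) < c/t for some constant c and all t > 0. -/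
open ProbabilityTheory MeasureTheory
open scoped NNReal ENNReal

/-- The quantity `1 − 4^{-k}·E[min(X, 4^k − 1)]` for `X ~ Poisson(4^k)`. -/
noncomputable def poissonDefect (k : ℕ) : ℝ :=
  1 - (4 : ℝ) ^ (-(k : ℤ)) *
    ∑' n : ℕ, min (n : ℝ) ((4 : ℝ) ^ k - 1) * poissonPMFReal ((4 : ℝ≥0) ^ k) n

lemma my_moment1 (r : ℝ≥0) : HasSum (fun n : ℕ => (n : ℝ) * poissonPMFReal r n) r := by
  have h : HasSum (fun n : ℕ => (n + 1 : ℝ) * poissonPMFReal r (n + 1)) ((r : ℝ) * 1) := by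
    have := (show HasSum (poissonPMFReal r) 1 from poissonPMFRealSum r).mul_left (r : ℝ)
    convert this using 2 with n
    · rfl
    unfold poissonPMFReal
    rw [Nat.factorial_succ]
    push_cast
    field_simp
    ring
  have h2 := (hasSum_nat_add_iff (f := fun n : ℕ => (n : ℝ) * poissonPMFReal r n) 1).mp
    (by exact_mod_cast h)
  simpa using h2

lemma my_moment2 (r : ℝ≥0) :
    HasSum (fun n : ℕ => (n : ℝ) * ((n : ℝ) - 1) * poissonPMFReal r n) ((r : ℝ)^2) := by
  have h : HasSum (fun n : ℕ => ((n : ℝ) + 2) * (((n : ℝ) + 2) - 1) * poissonPMFReal r (n + 2))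
      ((r : ℝ)^2 * 1) := by
    have := (show HasSum (poissonPMFReal r) 1 from poissonPMFRealSum r).mul_left ((r : ℝ)^2)
    convert this using 2 with n
    · rfl
    unfold poissonPMFReal
    rw [Nat.factorial_succ, Nat.factorial_succ]
    push_cast
    field_simp
    ring
  have h2 := (hasSum_nat_add_iff
      (f := fun n : ℕ => (n : ℝ) * ((n : ℝ) - 1) * poissonPMFReal r n) 2).mp
    (by exact_mod_cast h)
  simpa [Finset.sum_range_succ] using h2

lemma my_momentVar (r : ℝ≥0) :
    HasSum (fun n : ℕ => ((n : ℝ) - (r : ℝ))^2 * poissonPMFReal r n) (r : ℝ) := by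
  have h := ((my_moment2 r).add (((my_moment1 r).mul_left (1 - 2 * (r : ℝ))))).add
    ((show HasSum (poissonPMFReal r) 1 from poissonPMFRealSum r).mul_left ((r : ℝ)^2))
  convert h using 2 with n
  · ring
  · ring

lemma my_defect_le (k : ℕ) (hk : 1 ≤ k) : poissonDefect k ≤ 2 * (2 : ℝ) ^ (-(k : ℤ)) := by
  set s : ℝ := (2 : ℝ) ^ k with hs_def
  have hs : 2 ≤ s := by
    calc (2:ℝ) = 2 ^ 1 := (pow_one 2).symm
    _ ≤ 2 ^ k := pow_le_pow_right₀ one_le_two hk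
  have hs0 : (0:ℝ) < s := by linarith
  set r : ℝ≥0 := (4 : ℝ≥0) ^ k with hr_def
  have hr : (r : ℝ) = s ^ 2 := by
    rw [hr_def]
    push_cast
    rw [hs_def, show (4:ℝ) = 2 ^ 2 by norm_num, ← pow_mul, ← pow_mul, Nat.mul_comm]
  have h4 : (4 : ℝ) ^ k = s ^ 2 := by
    rw [hs_def, show (4:ℝ) = 2 ^ 2 by norm_num, ← pow_mul, ← pow_mul, Nat.mul_comm]
  set p : ℕ → ℝ := poissonPMFReal r with hp_def
  have hp0 : ∀ n, 0 ≤ p n := fun n => poissonPMFReal_nonneg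
  -- lower bound function has explicit sum
  have hg : HasSum (fun n : ℕ =>
      ((n : ℝ) - ((n : ℝ) - s ^ 2) ^ 2 / (2 * s) - (s / 2 + 1)) * p n)
      (s ^ 2 - (2 * s)⁻¹ * s ^ 2 - (s / 2 + 1)) := by
    have h := ((my_moment1 r).sub ((my_momentVar r).mul_left (2 * s)⁻¹)).sub
      ((show HasSum (poissonPMFReal r) 1 from poissonPMFRealSum r).mul_left (s / 2 + 1))
    rw [hr] at h
    convert h using 2 with n
    · rfl
    · field_simp
      ring
    · rw [mul_one]
  -- summability of the min series
  have hmin : Summable (fun n : ℕ => min (n : ℝ) (s ^ 2 - 1) * p n) := by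
    apply Summable.of_nonneg_of_le
      (fun n => mul_nonneg (le_min (Nat.cast_nonneg n) (by nlinarith)) (hp0 n))
      (fun n => mul_le_mul_of_nonneg_right (min_le_right _ _) (hp0 n))
    exact (show HasSum (poissonPMFReal r) 1 from poissonPMFRealSum r).summable.mul_left _
  -- pointwise comparison
  have hpt : ∀ n : ℕ,
      ((n : ℝ) - ((n : ℝ) - s ^ 2) ^ 2 / (2 * s) - (s / 2 + 1)) * p n
        ≤ min (n : ℝ) (s ^ 2 - 1) * p n := by
    intro n
    apply mul_le_mul_of_nonneg_right _ (hp0 n)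
    apply le_min
    · have h1 : 0 ≤ ((n : ℝ) - s ^ 2) ^ 2 / (2 * s) := by positivity
      linarith
    · have h2 : ((n : ℝ) - s ^ 2) - s / 2 ≤ ((n : ℝ) - s ^ 2) ^ 2 / (2 * s) := by
        rw [le_div_iff₀ (by positivity : (0:ℝ) < 2 * s)]
        nlinarith [sq_nonneg ((n : ℝ) - s ^ 2 - s)]
      linarith
  have hT : s ^ 2 - (2 * s)⁻¹ * s ^ 2 - (s / 2 + 1)
      ≤ ∑' n : ℕ, min (n : ℝ) (s ^ 2 - 1) * p n := by
    rw [← hg.tsum_eq]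
    exact Summable.tsum_le_tsum hpt hg.summable hmin
  have hinv : (2 * s)⁻¹ * s ^ 2 = s / 2 := by
    field_simp
  rw [hinv] at hT
  unfold poissonDefect
  rw [h4, show ((4:ℝ≥0) ^ k) = r from rfl, ← hp_def]
  rw [zpow_neg, zpow_natCast, h4, zpow_neg, zpow_natCast, ← hs_def]
  set T : ℝ := ∑' n : ℕ, min (n : ℝ) (s ^ 2 - 1) * p n with hT_def
  have key : (s ^ 2)⁻¹ * T - (1 - 2 * s⁻¹)
      = (s ^ 2)⁻¹ * (T - (s ^ 2 - s - 1)) + (s ^ 2)⁻¹ * (s - 1) := by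
    field_simp
    ring
  have h1 : 0 ≤ (s ^ 2)⁻¹ * (T - (s ^ 2 - s - 1)) :=
    mul_nonneg (by positivity) (by linarith)
  have h2 : 0 ≤ (s ^ 2)⁻¹ * (s - 1) := mul_nonneg (by positivity) (by linarith)
  nlinarith [key]

/-- `1 − 4^{-k}·E[min(X, 4^k − 1)] ≤ C·2^{-k}` for a constant `C`, and
consequently any nonnegative (possibly infinite) random variable `D` with
`P(D > 2^k√2) ≤ 1 − 4^{-k}·E[min(X, 4^k − 1)]` for all `k ≥ 1` satisfies
`P(D > t) < c/t` for some constant `c` and all `t > 0`. -/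
theorem poisson_defect_bound_and_tail :
    (∃ C : ℝ, ∀ k : ℕ, 1 ≤ k → poissonDefect k ≤ C * (2 : ℝ) ^ (-(k : ℤ))) ∧
    ∀ (Ω : Type) (_ : MeasurableSpace Ω) (μ : Measure Ω), IsProbabilityMeasure μ →
      ∀ D : Ω → ℝ≥0∞,
        (∀ k : ℕ, 1 ≤ k →
          μ {ω | ENNReal.ofReal ((2 : ℝ) ^ k * Real.sqrt 2) < D ω} ≤
            ENNReal.ofReal (poissonDefect k)) →
        ∃ c : ℝ, 0 < c ∧ ∀ t : ℝ, 0 < t →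
          μ {ω | ENNReal.ofReal t < D ω} < ENNReal.ofReal (c / t) := by
  constructor
  · exact ⟨2, my_defect_le⟩
  intro Ω _ μ hμ D hD
  have hrt2 : (0:ℝ) < Real.sqrt 2 := Real.sqrt_pos.mpr (by norm_num)
  have hrtlt : Real.sqrt 2 < 3 / 2 := by
    nlinarith [Real.sq_sqrt (show (0:ℝ) ≤ 2 by norm_num), Real.sqrt_nonneg 2]
  refine ⟨6, by norm_num, fun t ht => ?_⟩
  by_cases hcase : t ≤ 2 * Real.sqrt 2
  · -- small t: measure at most 1 < 6/t
    have h6t : 1 < 6 / t := by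
      rw [lt_div_iff₀ ht]
      nlinarith
    calc μ {ω | ENNReal.ofReal t < D ω} ≤ 1 := prob_le_one
    _ = ENNReal.ofReal 1 := by simp
    _ < ENNReal.ofReal (6 / t) := by
        rw [ENNReal.ofReal_lt_ofReal_iff (by positivity)]
        exact h6t
  · push_neg at hcase
    -- find k with 2^k √2 ≤ t < 2^(k+1) √2
    set x : ℝ := t / Real.sqrt 2 with hx_def
    have hx2 : (2:ℝ) < x := by
      rw [hx_def, lt_div_iff₀ hrt2]
      linarith
    set n : ℕ := ⌊x⌋₊ with hn_def
    have hn2 : 2 ≤ n := Nat.le_floor (by exact_mod_cast hx2.le)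
    have hn0 : n ≠ 0 := by omega
    set k : ℕ := Nat.log 2 n with hk_def
    have hk1 : 1 ≤ k := by
      rw [hk_def, Nat.le_log_iff_pow_le one_lt_two hn0]
      simpa using hn2
    have hpow_le : (2:ℝ) ^ k ≤ x := by
      calc ((2:ℝ) ^ k) = ((2 ^ k : ℕ) : ℝ) := by push_cast; ring
      _ ≤ (n : ℝ) := by exact_mod_cast Nat.pow_log_le_self 2 hn0
      _ ≤ x := Nat.floor_le (by positivity)
    have hx_lt : x < (2:ℝ) ^ (k + 1) := by
      have h1 : n < 2 ^ (k + 1) := Nat.lt_pow_succ_log_self one_lt_two n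
      have h2 : (n : ℝ) + 1 ≤ (2:ℝ) ^ (k + 1) := by
        have : (n + 1 : ℕ) ≤ 2 ^ (k + 1) := h1
        exact_mod_cast this
      have h3 : x < (n : ℝ) + 1 := Nat.lt_floor_add_one x
      linarith
    have hst : (2:ℝ) ^ k * Real.sqrt 2 ≤ t := by
      rw [← le_div_iff₀ hrt2]
      exact hpow_le
    have hts : t < 3 * (2:ℝ) ^ k := by
      have : t = x * Real.sqrt 2 := by
        rw [hx_def, div_mul_cancel₀ _ (ne_of_gt hrt2)]
      rw [this]
      calc x * Real.sqrt 2 < (2:ℝ) ^ (k + 1) * (3 / 2) := by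
            apply mul_lt_mul'' hx_lt hrtlt (by positivity) hrt2.le
      _ = 3 * (2:ℝ) ^ k := by rw [pow_succ]; ring
    have hmono : μ {ω | ENNReal.ofReal t < D ω}
        ≤ μ {ω | ENNReal.ofReal ((2:ℝ) ^ k * Real.sqrt 2) < D ω} := by
      apply measure_mono
      intro ω hω
      exact lt_of_le_of_lt (ENNReal.ofReal_le_ofReal hst) hω
    have hfin : 2 * (2:ℝ) ^ (-(k:ℤ)) < 6 / t := by
      rw [zpow_neg, zpow_natCast]
      have h1 : 6 / (3 * (2:ℝ) ^ k) < 6 / t :=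
        div_lt_div_of_pos_left (by norm_num) ht hts
      have h2 : 6 / (3 * (2:ℝ) ^ k) = 2 * ((2:ℝ) ^ k)⁻¹ := by
        field_simp
        ring
      linarith
    calc μ {ω | ENNReal.ofReal t < D ω}
        ≤ μ {ω | ENNReal.ofReal ((2:ℝ) ^ k * Real.sqrt 2) < D ω} := hmono
    _ ≤ ENNReal.ofReal (poissonDefect k) := hD k hk1
    _ ≤ ENNReal.ofReal (2 * (2:ℝ) ^ (-(k:ℤ))) :=
        ENNReal.ofReal_le_ofReal (my_defect_le k hk1)
    _ < ENNReal.ofReal (6 / t) := by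
        rw [ENNReal.ofReal_lt_ofReal_iff (by positivity)]
        exact hfin
end
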